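/- Let W ∈ ℝ^{N×N} be symmetric, doubly stochastic, positive semidefinite with second-largest eigenvalue σ₂(W) ∈ [0,1), let θ = 1/(1+√(1−σ₂(W)²)), b = 1 − (1 − 1/√2)·√(1−σ₂(W)), and B = ⌈√2·ln(N√(14N))/((√2−1)·√(1−σ₂(W)))⌉. Let y_l(v) ∈ ℝ^n for l ∈ {1,…,S−1}, v ∈ {1,…,N} be arbitrary, and let z_s^k(u) be given by the block gossip recursion: z_1^{−1}(u) = z_1^0(u) = 0; z_s^{k+1}(u) = (1+θ)·Σ_v W(u,v)·z_s^k(v) − θ·z_s^{k−1}(u) for k = 0,…,B−1; z_{s+1}^{−1}(u) = z_s^{B−1}(u) + y_s(u), z_{s+1}^0(u) = z_s^B(u) + y_s(u). Then for every u ∈ {1,…,N} and every s ∈ {1,…,S}: ‖z_s^B(u) − (1/N)·Σ_{l=1}^{s−1} Σ_{v=1}^N y_l(v)‖₂ ≤ (2/(N√N))·Σ_{l=1}^{s−1} b^{(s−l−1)B}·√(Σ_{v=1}^N ‖y_l(v)‖₂²). -/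

import Mathlib

open Finset

/-- The second-largest eigenvalue of a symmetric doubly stochastic matrix `W`,
expressed as the maximal Rayleigh quotient over the orthogonal complement of the
all-ones vector (the top eigenvector). -/
noncomputable def sigma2 {N : ℕ} (W : Matrix (Fin N) (Fin N) ℝ) : ℝ :=
  sSup {r : ℝ | ∃ x : EuclideanSpace ℝ (Fin N),
    ‖x‖ = 1 ∧ (∑ i, x i) = 0 ∧ r = ∑ i, ∑ j, W i j * x i * x j}

noncomputable def chebQ (θ lam : ℝ) : ℕ → ℝ
  | 0 => 1
  | 1 => 1
  | (k+2) => (1+θ) * lam * chebQ θ lam (k+1) - θ * chebQ θ lam k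

lemma chebQ_key (σ θ lam : ℝ) (hσ0 : 0 ≤ σ) (hσ1 : σ < 1)
    (hθ : θ = 1 / (1 + Real.sqrt (1 - σ^2))) (h0 : 0 ≤ lam) (h1 : lam ≤ σ) :
    θ*(1+θ)*(1-lam) ≤ 4*θ - ((1+θ)*lam)^2 := by
  have h1σ : 0 < 1 - σ^2 := by nlinarith
  set τ := Real.sqrt (1 - σ^2) with hτdef
  have hτ2 : τ^2 = 1 - σ^2 := Real.sq_sqrt h1σ.le
  have hτpos : 0 < τ := Real.sqrt_pos.2 h1σ
  have hτle1 : τ ≤ 1 := by nlinarith [sq_nonneg σ]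
  set u := 1 + τ with hudef
  have hu1 : 1 < u := by simp [hudef]; linarith
  have hu2 : u ≤ 2 := by simp [hudef]; linarith
  have hσ2u : σ^2 = 2*u - u^2 := by simp [hudef]; nlinarith
  have hθu : θ * u = 1 := by rw [hθ]; field_simp
  have hθpos : 0 < θ := by nlinarith
  have hG0 : (0:ℝ) ≤ 4*u - (u+1) := by linarith
  have hGσ : (0:ℝ) ≤ 4*u - (u+1)*(1-σ) - (u+1)^2*σ^2 := by
    have h1 : (0:ℝ) ≤ u^2 + u - 1 := by nlinarith
    nlinarith [mul_nonneg (mul_nonneg hσ0 (by linarith : (0:ℝ) ≤ 1 - σ)) (by linarith : (0:ℝ) ≤ u+1),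
      mul_nonneg (sq_nonneg (u-1)) h1]
  have key2 : (u+1)*(1-lam) + (u+1)^2*lam^2 ≤ 4*u := by
    rcases eq_or_lt_of_le hσ0 with h|hσpos
    · have : lam = 0 := le_antisymm (h ▸ h1) h0
      subst this; linarith
    · nlinarith [mul_nonneg (mul_nonneg h0 (sub_nonneg.2 h1)) hσpos.le,
        mul_nonneg (sub_nonneg.2 h1) hG0, mul_nonneg h0 hGσ, hσpos,
        mul_nonneg (mul_nonneg h0 (sub_nonneg.2 h1)) (sq_nonneg (u+1))]
  have h3 := mul_le_mul_of_nonneg_left key2 (sq_nonneg θ)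
  have h4 : 1 + θ = θ * (u + 1) := by linear_combination -hθu
  have h5 : θ*(1+θ)*(1-lam) = θ^2*((u+1)*(1-lam)) := by rw [h4]; ring
  have h6 : 4*θ - ((1+θ)*lam)^2 = θ^2*(4*u) - θ^2*((u+1)^2*lam^2) := by
    rw [h4]; linear_combination (-4*θ)*hθu
  rw [h5, h6]; nlinarith [h3]

lemma chebQ_succ_succ (θ lam : ℝ) (k : ℕ) :
    chebQ θ lam (k+2) = (1+θ) * lam * chebQ θ lam (k+1) - θ * chebQ θ lam k := rfl

lemma theta_pos (σ θ : ℝ) (hσ0 : 0 ≤ σ) (hσ1 : σ < 1)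
    (hθ : θ = 1 / (1 + Real.sqrt (1 - σ^2))) : 0 < θ := by
  rw [hθ]
  have : 0 ≤ Real.sqrt (1 - σ^2) := Real.sqrt_nonneg _
  positivity

lemma chebQ_sq_le (σ θ lam : ℝ) (hσ0 : 0 ≤ σ) (hσ1 : σ < 1)
    (hθ : θ = 1 / (1 + Real.sqrt (1 - σ^2))) (h0 : 0 ≤ lam) (h1 : lam ≤ σ) (m : ℕ) :
    (chebQ θ lam (m+1))^2 ≤ 4 * θ^m := by
  have key := chebQ_key σ θ lam hσ0 hσ1 hθ h0 h1
  have hθpos : 0 < θ := theta_pos σ θ hσ0 hσ1 hθ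
  set a := (1+θ)*lam with ha
  have hNf : ∀ k, (chebQ θ lam (k+1))^2 - a * (chebQ θ lam (k+1)) * (chebQ θ lam k)
      + θ * (chebQ θ lam k)^2 = θ^k * ((1+θ)*(1-lam)) := by
    intro k
    induction k with
    | zero => simp only [chebQ, pow_zero]; ring
    | succ k ih =>
      rw [chebQ_succ_succ]
      linear_combination θ * ih
  have hq := hNf m
  set x := chebQ θ lam (m+1)
  set y := chebQ θ lam m
  have hP : 0 < θ^m := pow_pos hθpos m
  have hden : 0 < 4*θ - a^2 := by
    have h2 : 0 < θ*(1+θ)*(1-lam) := by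
      have : 0 < 1 - lam := by linarith
      have : 0 < 1 + θ := by linarith
      positivity
    linarith
  have hq4 : 4*θ*(x^2 - a*x*y + θ*y^2) = 4*θ*(θ^m * ((1+θ)*(1-lam))) := by rw [hq]
  have hkey4P : 4*θ^m*(θ*((1+θ)*(1-lam))) ≤ 4*θ^m*(4*θ - a^2) :=
    mul_le_mul_of_nonneg_left (by linarith) (by positivity)
  nlinarith [sq_nonneg (a*x - 2*θ*y), hq4, hkey4P, hden, hP]

lemma theta_le_b_sq (σ θ b : ℝ) (hσ0 : 0 ≤ σ) (hσ1 : σ < 1)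
    (hθ : θ = 1 / (1 + Real.sqrt (1 - σ^2)))
    (hb : b = 1 - (1 - 1 / Real.sqrt 2) * Real.sqrt (1 - σ)) :
    θ ≤ b^2 := by
  have h1σ : 0 < 1 - σ^2 := by nlinarith
  set τ := Real.sqrt (1 - σ^2) with hτdef
  have hτ2 : τ^2 = 1 - σ^2 := Real.sq_sqrt h1σ.le
  have hτpos : 0 < τ := Real.sqrt_pos.2 h1σ
  set δ := Real.sqrt (1 - σ) with hδdef
  have hδ2 : δ^2 = 1 - σ := Real.sq_sqrt (by linarith)
  have hδ0 : 0 ≤ δ := Real.sqrt_nonneg _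
  have hδ1 : δ ≤ 1 := by nlinarith
  have hδτ : δ ≤ τ := Real.sqrt_le_sqrt (by nlinarith)
  set s := Real.sqrt 2 with hsdef
  have hs2 : s^2 = 2 := Real.sq_sqrt (by norm_num)
  have hspos : 0 < s := Real.sqrt_pos.2 (by norm_num)
  have hs54 : 5/4 ≤ s := by nlinarith
  have hs32 : s ≤ 3/2 := by nlinarith
  have hcs : 1 - 1/s = (2-s)/2 := by
    field_simp; nlinarith
  rw [hcs] at hb
  have hθτ : θ * (1+τ) = 1 := by rw [hθ]; field_simp
  have hbval : b = 1 - (2-s)/2*δ := hb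
  -- (1+δ) * b^2 ≥ 1
  have hψ : 1 ≤ (1+δ) * b^2 := by
    rw [hbval]
    have h36 : (0:ℝ) ≤ 1 - (3-2*s)*(δ+1) := by nlinarith
    have hprod : 0 ≤ δ*((1-δ)*(1-(3-2*s)*(δ+1))) :=
      mul_nonneg hδ0 (mul_nonneg (by linarith) h36)
    have hident : (1+δ)*(1-(2-s)/2*δ)^2 - 1 =
        δ*((1-δ)*(1-(3-2*s)*(δ+1)))/2 + (s^2-2)*(δ^2+δ^3)/4 := by ring
    rw [hs2] at hident
    norm_num at hident
    linarith
  have hθpos : 0 < θ := theta_pos σ θ hσ0 hσ1 hθ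
  have h3 : θ * (1+δ) ≤ 1 := by nlinarith
  nlinarith [mul_le_mul_of_nonneg_left hψ hθpos.le, sq_nonneg b]

lemma b_bounds (σ b : ℝ) (hσ0 : 0 ≤ σ) (hσ1 : σ < 1)
    (hb : b = 1 - (1 - 1 / Real.sqrt 2) * Real.sqrt (1 - σ)) :
    1/2 ≤ b ∧ b ≤ 1 := by
  set s := Real.sqrt 2 with hsdef
  have hs2 : s^2 = 2 := Real.sq_sqrt (by norm_num)
  have hspos : 0 < s := Real.sqrt_pos.2 (by norm_num)
  have hs54 : 5/4 ≤ s := by nlinarith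
  have hs32 : s ≤ 3/2 := by nlinarith
  set δ := Real.sqrt (1 - σ) with hδdef
  have hδ2 : δ^2 = 1 - σ := Real.sq_sqrt (by linarith)
  have hδ0 : 0 ≤ δ := Real.sqrt_nonneg _
  have hδ1 : δ ≤ 1 := by nlinarith
  have hc0 : 0 ≤ 1 - 1/s := by
    have : 1/s ≤ 1 := by rw [div_le_one hspos]; linarith
    linarith
  have hc12 : 1 - 1/s ≤ 1/2 := by
    have : 1/2 ≤ 1/s := by rw [le_div_iff₀ hspos]; linarith
    linarith
  constructor
  · rw [hb]; nlinarith [mul_le_mul_of_nonneg_right hc12 hδ0]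
  · rw [hb]; nlinarith [mul_nonneg hc0 hδ0]

lemma chebQ_abs_le (σ θ b lam : ℝ) (hσ0 : 0 ≤ σ) (hσ1 : σ < 1)
    (hθ : θ = 1 / (1 + Real.sqrt (1 - σ^2)))
    (hb : b = 1 - (1 - 1 / Real.sqrt 2) * Real.sqrt (1 - σ))
    (h0 : 0 ≤ lam) (h1 : lam ≤ σ) (m : ℕ) :
    |chebQ θ lam (m+1)| ≤ 2 * b^m := by
  have hsq := chebQ_sq_le σ θ lam hσ0 hσ1 hθ h0 h1 m
  have hθb := theta_le_b_sq σ θ b hσ0 hσ1 hθ hb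
  have hθpos : 0 < θ := theta_pos σ θ hσ0 hσ1 hθ
  have hbpos : 0 < b := by linarith [(b_bounds σ b hσ0 hσ1 hb).1]
  have h2 : θ^m ≤ (b^2)^m := pow_le_pow_left₀ hθpos.le hθb m
  have h3 : (chebQ θ lam (m+1))^2 ≤ (2*b^m)^2 := by
    calc (chebQ θ lam (m+1))^2 ≤ 4*θ^m := hsq
    _ ≤ 4*(b^2)^m := by linarith
    _ = (2*b^m)^2 := by rw [← pow_mul, mul_pow]; ring_nf
  calc |chebQ θ lam (m+1)| = Real.sqrt ((chebQ θ lam (m+1))^2) := (Real.sqrt_sq_eq_abs _).symm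
  _ ≤ Real.sqrt ((2*b^m)^2) := Real.sqrt_le_sqrt h3
  _ = 2*b^m := Real.sqrt_sq (by positivity)

noncomputable def gQ {N : ℕ} {M : Type*} [AddCommGroup M] [Module ℝ M]
    (W : Matrix (Fin N) (Fin N) ℝ) (θ : ℝ) : ℕ → (Fin N → M) → (Fin N → M)
  | 0, x => x
  | 1, x => x
  | (k+2), x => (1+θ) • (fun u => ∑ v, W u v • gQ W θ (k+1) x v) - θ • gQ W θ k x

lemma gQ_zero {N : ℕ} {M : Type*} [AddCommGroup M] [Module ℝ M]
    (W : Matrix (Fin N) (Fin N) ℝ) (θ : ℝ) (x : Fin N → M) : gQ W θ 0 x = x := rfl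

lemma gQ_one {N : ℕ} {M : Type*} [AddCommGroup M] [Module ℝ M]
    (W : Matrix (Fin N) (Fin N) ℝ) (θ : ℝ) (x : Fin N → M) : gQ W θ 1 x = x := rfl

lemma gQ_succ_succ {N : ℕ} {M : Type*} [AddCommGroup M] [Module ℝ M]
    (W : Matrix (Fin N) (Fin N) ℝ) (θ : ℝ) (k : ℕ) (x : Fin N → M) :
    gQ W θ (k+2) x = (1+θ) • (fun u => ∑ v, W u v • gQ W θ (k+1) x v) - θ • gQ W θ k x := rfl

lemma gQ_add {N : ℕ} {M : Type*} [AddCommGroup M] [Module ℝ M]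
    (W : Matrix (Fin N) (Fin N) ℝ) (θ : ℝ) (m : ℕ) (x y : Fin N → M) :
    gQ W θ m (x + y) = gQ W θ m x + gQ W θ m y := by
  induction m using Nat.twoStepInduction with
  | zero => rfl
  | one => rfl
  | more k ih1 ih2 =>
    rw [gQ_succ_succ, gQ_succ_succ, gQ_succ_succ, ih1, ih2]
    funext u
    simp [Finset.sum_add_distrib, smul_add]
    abel

lemma gQ_smul {N : ℕ} {M : Type*} [AddCommGroup M] [Module ℝ M]
    (W : Matrix (Fin N) (Fin N) ℝ) (θ : ℝ) (m : ℕ) (c : ℝ) (x : Fin N → M) :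
    gQ W θ m (c • x) = c • gQ W θ m x := by
  induction m using Nat.twoStepInduction with
  | zero => rfl
  | one => rfl
  | more k ih1 ih2 =>
    rw [gQ_succ_succ, gQ_succ_succ, ih1, ih2]
    funext u
    simp [Finset.smul_sum, smul_sub, smul_comm c]

lemma gQ_const {N : ℕ} {M : Type*} [AddCommGroup M] [Module ℝ M]
    (W : Matrix (Fin N) (Fin N) ℝ) (θ : ℝ) (hWrow : ∀ i, ∑ j, W i j = 1)
    (m : ℕ) (c : M) :
    gQ W θ m (fun _ => c) = fun _ => c := by
  induction m using Nat.twoStepInduction with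
  | zero => rfl
  | one => rfl
  | more k ih1 ih2 =>
    rw [gQ_succ_succ, ih1, ih2]
    funext u
    have : ∑ v, W u v • c = (1:ℝ) • c := by
      rw [← Finset.sum_smul, hWrow u]
    simp only [Pi.sub_apply, Pi.smul_apply, this, one_smul]
    rw [add_smul, one_smul]
    abel

lemma gQ_coord {N n : ℕ} (W : Matrix (Fin N) (Fin N) ℝ) (θ : ℝ) (m : ℕ)
    (x : Fin N → EuclideanSpace ℝ (Fin n)) (u : Fin N) (i : Fin n) :
    gQ W θ m x u i = gQ W θ m (fun v => x v i) u := by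
  induction m using Nat.twoStepInduction generalizing u with
  | zero => rfl
  | one => rfl
  | more k ih1 ih2 =>
    rw [gQ_succ_succ, gQ_succ_succ]
    simp only [Pi.sub_apply, Pi.smul_apply, PiLp.sub_apply, PiLp.smul_apply, smul_eq_mul]
    rw [show ((∑ v, W u v • gQ W θ (k+1) x v) i) = ∑ v, W u v * gQ W θ (k+1) x v i by
      rw [WithLp.ofLp_sum, Finset.sum_apply]
      simp only [WithLp.ofLp_smul, Pi.smul_apply, smul_eq_mul]]
    simp_rw [ih1, ih2]

lemma gQ_eigen {N : ℕ} (W : Matrix (Fin N) (Fin N) ℝ) (θ lam : ℝ) (m : ℕ)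
    (w : Fin N → ℝ) (hw : ∀ u, ∑ v, W u v * w v = lam * w u) :
    gQ W θ m w = fun u => chebQ θ lam m * w u := by
  induction m using Nat.twoStepInduction with
  | zero => funext u; simp [gQ_zero, chebQ]
  | one => funext u; simp [gQ_one, chebQ]
  | more k ih1 ih2 =>
    rw [gQ_succ_succ, ih1, ih2]
    funext u
    simp only [Pi.sub_apply, Pi.smul_apply, smul_eq_mul, chebQ_succ_succ]
    have h2 : ∑ x, W u x * (chebQ θ lam (k+1) * w x) = chebQ θ lam (k+1) * (lam * w u) := by
      rw [← hw u, Finset.mul_sum]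
      exact Finset.sum_congr rfl (fun v _ => by ring)
    rw [h2]; ring

lemma sumsq_eq_normsq (N : ℕ) (x : EuclideanSpace ℝ (Fin N)) : ‖x‖^2 = ∑ u, x u^2 := by
  rw [EuclideanSpace.norm_eq, Real.sq_sqrt (by positivity)]
  simp [sq_abs]

lemma euclidean_inner_eq (N : ℕ) (x y : EuclideanSpace ℝ (Fin N)) :
    (inner ℝ x y : ℝ) = ∑ u, x u * y u := by
  simp [PiLp.inner_apply, RCLike.inner_apply, conj_trivial]
  exact Finset.sum_congr rfl (fun _ _ => mul_comm _ _)

lemma rayleigh_le_one (N : ℕ) (W : Matrix (Fin N) (Fin N) ℝ)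
    (hWnonneg : ∀ i j, 0 ≤ W i j)
    (hWrow : ∀ i, ∑ j, W i j = 1) (hWcol : ∀ j, ∑ i, W i j = 1)
    (x : Fin N → ℝ) (hx : ∑ u, x u^2 = 1) :
    ∑ i, ∑ j, W i j * x i * x j ≤ 1 := by
  have key : ∀ i, ∑ j, W i j * (x i^2 + x j^2)/2 = x i^2/2 + (∑ j, W i j * x j^2)/2 := by
    intro i
    have : ∀ j ∈ Finset.univ, W i j * (x i^2 + x j^2)/2
        = x i^2/2 * W i j + (W i j * x j^2)/2 := fun j _ => by ring
    rw [Finset.sum_congr rfl this, Finset.sum_add_distrib, ← Finset.mul_sum, hWrow i,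
      ← Finset.sum_div, mul_one]
  calc ∑ i, ∑ j, W i j * x i * x j
      ≤ ∑ i, ∑ j, W i j * (x i^2 + x j^2)/2 := by
        refine Finset.sum_le_sum (fun i _ => Finset.sum_le_sum (fun j _ => ?_))
        nlinarith [hWnonneg i j, sq_nonneg (x i - x j), mul_nonneg (hWnonneg i j) (sq_nonneg (x i - x j))]
    _ = 1 := by
        rw [Finset.sum_congr rfl (fun i _ => key i), Finset.sum_add_distrib, ← Finset.sum_div, hx]
        have : ∀ i ∈ Finset.univ, (∑ j, W i j * x j^2)/2 = ∑ j, W i j * x j^2/2 :=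
          fun i _ => by rw [Finset.sum_div]
        rw [Finset.sum_congr rfl this, Finset.sum_comm]
        have : ∀ j ∈ Finset.univ, ∑ i, W i j * x j^2/2 = x j^2/2 := by
          intro j _
          have : ∀ i ∈ Finset.univ, W i j * x j^2/2 = x j^2/2 * W i j := fun i _ => by ring
          rw [Finset.sum_congr rfl this, ← Finset.mul_sum, hWcol j, mul_one]
        rw [Finset.sum_congr rfl this, ← Finset.sum_div, hx]
        norm_num

lemma le_sigma2 (N : ℕ) (W : Matrix (Fin N) (Fin N) ℝ)
    (hWnonneg : ∀ i j, 0 ≤ W i j)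
    (hWrow : ∀ i, ∑ j, W i j = 1) (hWcol : ∀ j, ∑ i, W i j = 1)
    (x : EuclideanSpace ℝ (Fin N)) (hx1 : ‖x‖ = 1) (hx0 : (∑ u, x u) = 0) :
    ∑ i, ∑ j, W i j * x i * x j ≤ sigma2 W := by
  apply le_csSup
  · refine ⟨1, ?_⟩
    rintro r ⟨xx, h1, h0, rfl⟩
    have hsq : ∑ u, xx u^2 = 1 := by
      rw [← sumsq_eq_normsq, h1]; norm_num
    exact rayleigh_le_one N W hWnonneg hWrow hWcol (fun u => xx u) hsq
  · exact ⟨x, hx1, hx0, rfl⟩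

lemma gQ_zero_vec {N : ℕ} {M : Type*} [AddCommGroup M] [Module ℝ M]
    (W : Matrix (Fin N) (Fin N) ℝ) (θ : ℝ) (m : ℕ) :
    gQ W θ m (0 : Fin N → M) = 0 := by
  have := gQ_smul W θ m 0 (0 : Fin N → M)
  simpa using this

lemma gQ_finsum {N : ℕ} {M : Type*} [AddCommGroup M] [Module ℝ M]
    (W : Matrix (Fin N) (Fin N) ℝ) (θ : ℝ) (m : ℕ) {ι : Type*} [Fintype ι]
    (f : ι → (Fin N → M)) :
    gQ W θ m (∑ i, f i) = ∑ i, gQ W θ m (f i) := by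
  classical
  induction (Finset.univ : Finset ι) using Finset.induction with
  | empty => simp [gQ_zero_vec]
  | insert _ _ hx ih =>
    rw [Finset.sum_insert hx, Finset.sum_insert hx, gQ_add, ih]

lemma piLp_sum_apply {ι : Type*} [Fintype ι] (N : ℕ) (f : ι → EuclideanSpace ℝ (Fin N))
    (s : Finset ι) (u : Fin N) : (∑ i ∈ s, f i) u = ∑ i ∈ s, f i u := by
  rw [WithLp.ofLp_sum, Finset.sum_apply]

lemma gQ_spectral (N : ℕ) (W : Matrix (Fin N) (Fin N) ℝ)
    (hWsymm : W.IsSymm) (hWnonneg : ∀ i j, 0 ≤ W i j)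
    (hWrow : ∀ i, ∑ j, W i j = 1) (hWcol : ∀ j, ∑ i, W i j = 1)
    (hWpsd : W.PosSemidef)
    (hσ0 : 0 ≤ sigma2 W) (hσ1 : sigma2 W < 1)
    (θ b : ℝ)
    (hθ : θ = 1 / (1 + Real.sqrt (1 - sigma2 W ^ 2)))
    (hb : b = 1 - (1 - 1 / Real.sqrt 2) * Real.sqrt (1 - sigma2 W))
    (m : ℕ) (w : Fin N → ℝ) (hw : ∑ u, w u = 0) :
    ∑ u, (gQ W θ (m+1) w u)^2 ≤ (2*b^m)^2 * ∑ u, (w u)^2 := by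
  classical
  set σ := sigma2 W with hσdef
  have hT : (Matrix.toEuclideanLin W).IsSymmetric := Matrix.isHermitian_iff_isSymmetric.mp hWpsd.1
  set β := hT.eigenvectorBasis finrank_euclideanSpace_fin with hβdef
  set μ := hT.eigenvalues finrank_euclideanSpace_fin with hμdef
  have happly : ∀ i, Matrix.toEuclideanLin W (β i) = (μ i : ℝ) • β i :=
    fun i => hT.apply_eigenvectorBasis finrank_euclideanSpace_fin i
  -- pointwise eigen equation
  have heig : ∀ i u, ∑ v, W u v * β i v = μ i * β i u := by
    intro i u
    have h1 := congrFun (congrArg WithLp.ofLp (happly i)) u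
    simp only [Matrix.ofLp_toEuclideanLin_apply, WithLp.ofLp_smul,
      Pi.smul_apply, smul_eq_mul, Matrix.mulVec, dotProduct] at h1
    exact h1
  have hβnorm : ∀ i, ∑ u, β i u ^2 = 1 := by
    intro i
    rw [← sumsq_eq_normsq, β.orthonormal.1 i]; norm_num
  -- dichotomy
  have hdicho : ∀ i, (0 ≤ μ i ∧ μ i ≤ σ) ∨ (∀ u, β i u = (∑ t, β i t)/N) := by
    intro i
    by_cases hci : (∑ t, β i t) = 0
    · left
      have hray : ∑ u, ∑ v, W u v * β i u * β i v = μ i := by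
        calc ∑ u, ∑ v, W u v * β i u * β i v = ∑ u, β i u * (∑ v, W u v * β i v) := by
              refine Finset.sum_congr rfl (fun u _ => ?_)
              rw [Finset.mul_sum]
              exact Finset.sum_congr rfl (fun v _ => by ring)
          _ = ∑ u, β i u * (μ i * β i u) := by
              refine Finset.sum_congr rfl (fun u _ => by rw [heig])
          _ = μ i * ∑ u, β i u ^2 := by rw [Finset.mul_sum]; exact Finset.sum_congr rfl (fun u _ => by ring)
          _ = μ i := by rw [hβnorm]; ring
      constructor
      · have hpsd := hWpsd.dotProduct_mulVec_nonneg (fun u => β i u)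
        simp only [dotProduct, Matrix.mulVec, star_trivial, Pi.star_apply] at hpsd
        rw [← hray]
        refine le_trans hpsd (le_of_eq ?_)
        refine Finset.sum_congr rfl (fun u _ => ?_)
        rw [Finset.mul_sum]
        exact Finset.sum_congr rfl (fun v _ => by ring)
      · rw [← hray]
        exact le_sigma2 N W hWnonneg hWrow hWcol (β i) (β.orthonormal.1 i) hci
    · right
      have hN0 : N ≠ 0 := by
        rintro rfl
        exact hci (by simp)
      have hNpos : 0 < (N:ℝ) := by exact_mod_cast Nat.pos_of_ne_zero hN0
      set c := (∑ t, β i t) with hcdef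
      -- μ i = 1
      have hμ1 : μ i = 1 := by
        have hsumT : ∑ u, ∑ v, W u v * β i v = ∑ v, β i v := by
          rw [Finset.sum_comm]
          refine Finset.sum_congr rfl (fun v _ => ?_)
          have : ∀ u ∈ Finset.univ, W u v * β i v = β i v * W u v := fun u _ => by ring
          rw [Finset.sum_congr rfl this, ← Finset.mul_sum, hWcol v, mul_one]
        have hsumT2 : ∑ u, μ i * β i u = μ i * c := by rw [← Finset.mul_sum]
        have := Finset.sum_congr rfl (fun u (_ : u ∈ Finset.univ) => heig i u)
        rw [hsumT, hsumT2] at this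
        have := this
        field_simp at this
        rcases mul_eq_mul_right_iff.mp (by linarith [this] : μ i * c = 1 * c) with h | h
        · exact h
        · exact absurd h hci
      -- x := β i - c/N is fixed vector with sum zero; must be zero
      set x : Fin N → ℝ := fun u => β i u - c/N with hxdef
      have hxsum : ∑ u, x u = 0 := by
        simp only [hxdef, Finset.sum_sub_distrib, Finset.sum_const, Finset.card_univ,
          Fintype.card_fin, nsmul_eq_mul]
        rw [← hcdef]
        field_simp
        ring
      have hxeig : ∀ u, ∑ v, W u v * x v = x u := by
        intro u
        simp only [hxdef, mul_sub, Finset.sum_sub_distrib]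
        rw [heig i u, hμ1, one_mul, ← Finset.sum_mul, hWrow u, one_mul]
      have hxzero : x = 0 := by
        by_contra hxne
        have hxpos : 0 < ∑ u, x u^2 := by
          rcases Function.ne_iff.mp hxne with ⟨u0, hu0⟩
          have : 0 < x u0 ^2 := by nlinarith [sq_nonneg (x u0), sq_abs (x u0), abs_pos.mpr hu0]
          exact Finset.sum_pos' (fun u _ => sq_nonneg _) ⟨u0, Finset.mem_univ u0, this⟩
        set t := Real.sqrt (∑ u, x u^2) with htdef
        have htpos : 0 < t := Real.sqrt_pos.2 hxpos
        have ht2 : t^2 = ∑ u, x u^2 := Real.sq_sqrt hxpos.le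
        set xn : EuclideanSpace ℝ (Fin N) := (WithLp.equiv 2 (Fin N → ℝ)).symm (fun u => x u / t) with hxndef
        have hxn_apply : ∀ u, xn u = x u / t := fun u => rfl
        have hxnnorm : ‖xn‖ = 1 := by
          have h2 : ‖xn‖^2 = 1 := by
            rw [sumsq_eq_normsq]
            simp only [hxn_apply, div_pow]
            rw [← Finset.sum_div, ← ht2]
            field_simp
          have := abs_eq_abs.mpr (Or.inl (by nlinarith [norm_nonneg xn] : ‖xn‖ = 1) )
          nlinarith [norm_nonneg xn]
        have hxnsum : ∑ u, xn u = 0 := by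
          simp only [hxn_apply]
          rw [← Finset.sum_div, hxsum, zero_div]
        have hr1 : ∑ u, ∑ v, W u v * xn u * xn v = 1 := by
          have : ∀ u, ∑ v, W u v * xn u * xn v = (x u/t) * (x u/t) := by
            intro u
            simp only [hxn_apply]
            have : ∀ v ∈ Finset.univ, W u v * (x u/t) * (x v/t) = (x u/t/t) * (W u v * x v) :=
              fun v _ => by ring
            rw [Finset.sum_congr rfl this, ← Finset.mul_sum, hxeig u]
            ring
          rw [Finset.sum_congr rfl (fun u _ => this u)]
          have : ∀ u ∈ Finset.univ, (x u/t) * (x u/t) = x u^2 / t^2 := fun u _ => by ring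
          rw [Finset.sum_congr rfl this, ← Finset.sum_div, ht2]
          field_simp
        have := le_sigma2 N W hWnonneg hWrow hWcol xn hxnnorm hxnsum
        rw [hr1] at this
        rw [hσdef] at *
        linarith
      intro u
      have := congrFun hxzero u
      simp only [hxdef, Pi.zero_apply] at this
      linarith [this]
  -- decomposition of w
  set wE : EuclideanSpace ℝ (Fin N) := (WithLp.equiv 2 (Fin N → ℝ)).symm w with hwEdef
  have hwE_apply : ∀ u, wE u = w u := fun u => rfl
  set a : Fin N → ℝ := fun i => β.repr wE i with hadef
  have ha_inner : ∀ i, a i = ∑ u, β i u * w u := by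
    intro i
    show β.repr wE i = _
    rw [β.repr_apply_apply, euclidean_inner_eq]
    rfl
  have hcase : ∀ i, (0 ≤ μ i ∧ μ i ≤ σ) ∨ a i = 0 := by
    intro i
    rcases hdicho i with h | h
    · exact Or.inl h
    · right
      rw [ha_inner i]
      have : ∀ u ∈ Finset.univ, β i u * w u = ((∑ t, β i t)/N) * w u :=
        fun u _ => by rw [h u]
      rw [Finset.sum_congr rfl this, ← Finset.mul_sum, hw, mul_zero]
  have hdecomp : ∀ u, w u = ∑ i, a i * β i u := by
    intro u
    have h2 := congrArg (fun (z : EuclideanSpace ℝ (Fin N)) => z u) (β.sum_repr wE)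
    simp only at h2
    rw [piLp_sum_apply] at h2
    rw [← hwE_apply u, ← h2]
    exact Finset.sum_congr rfl (fun i _ => by rw [PiLp.smul_apply, smul_eq_mul])
  -- gQ action on w
  have hw_eq : w = ∑ i, (fun u => a i * β i u) := by
    funext u
    rw [hdecomp u, Finset.sum_apply]
  have hgQi : ∀ i, gQ W θ (m+1) (fun u => a i * β i u)
      = fun u => a i * (chebQ θ (μ i) (m+1) * β i u) := by
    intro i
    have h1 : (fun u => a i * β i u) = a i • (fun u => β i u) := by
      funext u; simp [smul_eq_mul]
    rw [h1, gQ_smul, gQ_eigen W θ (μ i) (m+1) (fun u => β i u) (heig i)]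
    funext u; simp [smul_eq_mul]
  have hgQ : ∀ u, gQ W θ (m+1) w u = ∑ i, a i * (chebQ θ (μ i) (m+1) * β i u) := by
    intro u
    rw [hw_eq, gQ_finsum]
    rw [Finset.sum_apply]
    exact Finset.sum_congr rfl (fun i _ => by rw [hgQi i])
  -- Parseval
  have hparseval : ∀ c : Fin N → ℝ,
      ∑ u, (∑ i, c i * β i u)^2 = ∑ i, (c i)^2 := by
    intro c
    have h1 := β.orthonormal.inner_sum c c Finset.univ
    simp only [conj_trivial] at h1
    set gE : EuclideanSpace ℝ (Fin N) := ∑ i, c i • β i with hgEdef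
    have h2 : ∀ u, gE u = ∑ i, c i * β i u := by
      intro u
      rw [hgEdef, piLp_sum_apply]
      exact Finset.sum_congr rfl (fun i _ => by rw [PiLp.smul_apply, smul_eq_mul])
    have h3 : (inner ℝ gE gE : ℝ) = ∑ u, (∑ i, c i * β i u)^2 := by
      rw [euclidean_inner_eq]
      exact Finset.sum_congr rfl (fun u _ => by rw [h2 u]; ring)
    rw [← h3, hgEdef]
    rw [h1]
    exact Finset.sum_congr rfl (fun i _ => by ring)
  have hL : ∑ u, (gQ W θ (m+1) w u)^2 = ∑ i, (a i * chebQ θ (μ i) (m+1))^2 := by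
    have := hparseval (fun i => a i * chebQ θ (μ i) (m+1))
    rw [← this]
    refine Finset.sum_congr rfl (fun u _ => ?_)
    rw [hgQ u]
    congr 1
    exact Finset.sum_congr rfl (fun i _ => by ring)
  have hR : ∑ u, (w u)^2 = ∑ i, (a i)^2 := by
    have := hparseval a
    rw [← this]
    exact Finset.sum_congr rfl (fun u _ => by rw [hdecomp u])
  rw [hL, hR, Finset.mul_sum]
  apply Finset.sum_le_sum
  intro i _
  rcases hcase i with ⟨h0, h1⟩ | hz
  · have habs := chebQ_abs_le σ θ b (μ i) hσ0 hσ1 hθ hb h0 h1 m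
    have hb0 : 0 ≤ 2*b^m := by
      have := (b_bounds σ b hσ0 hσ1 hb).1
      positivity
    have hsq : (chebQ θ (μ i) (m+1))^2 ≤ (2*b^m)^2 := by
      nlinarith [sq_abs (chebQ θ (μ i) (m+1)), abs_nonneg (chebQ θ (μ i) (m+1))]
    nlinarith [sq_nonneg (a i), mul_le_mul_of_nonneg_left hsq (sq_nonneg (a i))]
  · rw [hz]
    simp

lemma gQ_vec_bound (n N : ℕ) (W : Matrix (Fin N) (Fin N) ℝ)
    (hWsymm : W.IsSymm) (hWnonneg : ∀ i j, 0 ≤ W i j)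
    (hWrow : ∀ i, ∑ j, W i j = 1) (hWcol : ∀ j, ∑ i, W i j = 1)
    (hWpsd : W.PosSemidef)
    (hσ0 : 0 ≤ sigma2 W) (hσ1 : sigma2 W < 1)
    (θ b : ℝ)
    (hθ : θ = 1 / (1 + Real.sqrt (1 - sigma2 W ^ 2)))
    (hb : b = 1 - (1 - 1 / Real.sqrt 2) * Real.sqrt (1 - sigma2 W))
    (m : ℕ) (x : Fin N → EuclideanSpace ℝ (Fin n))
    (hx : ∑ v, x v = 0) (u : Fin N) :
    ‖gQ W θ (m+1) x u‖ ≤ 2*b^m * Real.sqrt (∑ v, ‖x v‖^2) := by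
  have hbpos : 0 < b := by linarith [(b_bounds (sigma2 W) b hσ0 hσ1 hb).1]
  have hb0 : 0 ≤ 2*b^m := by positivity
  have hcoord : ∀ i : Fin n, ∑ v, x v i = 0 := by
    intro i
    have h2 := congrArg (fun z : EuclideanSpace ℝ (Fin n) => z i) hx
    simp only at h2
    rw [piLp_sum_apply] at h2
    simpa using h2
  have hkey : ∀ i, (gQ W θ (m+1) x u i)^2 ≤ (2*b^m)^2 * ∑ v, (x v i)^2 := by
    intro i
    rw [gQ_coord]
    have hspec := gQ_spectral N W hWsymm hWnonneg hWrow hWcol hWpsd hσ0 hσ1 θ b hθ hb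
      m (fun v => x v i) (hcoord i)
    have hsingle : (gQ W θ (m+1) (fun v => x v i) u)^2
        ≤ ∑ u', (gQ W θ (m+1) (fun v => x v i) u')^2 :=
      Finset.single_le_sum (f := fun u' => (gQ W θ (m+1) (fun v => x v i) u')^2)
        (fun _ _ => sq_nonneg _) (Finset.mem_univ u)
    exact le_trans hsingle hspec
  have hnorm2 : ‖gQ W θ (m+1) x u‖^2 ≤ (2*b^m)^2 * ∑ v, ‖x v‖^2 := by
    rw [sumsq_eq_normsq]
    calc ∑ i, (gQ W θ (m+1) x u i)^2
        ≤ ∑ i, (2*b^m)^2 * ∑ v, (x v i)^2 := Finset.sum_le_sum (fun i _ => hkey i)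
      _ = (2*b^m)^2 * ∑ i, ∑ v, (x v i)^2 := by rw [Finset.mul_sum]
      _ = (2*b^m)^2 * ∑ v, ‖x v‖^2 := by
          congr 1
          rw [Finset.sum_comm]
          exact Finset.sum_congr rfl (fun v _ => (sumsq_eq_normsq n (x v)).symm)
  calc ‖gQ W θ (m+1) x u‖ = Real.sqrt (‖gQ W θ (m+1) x u‖^2) :=
        (Real.sqrt_sq (norm_nonneg _)).symm
    _ ≤ Real.sqrt ((2*b^m)^2 * ∑ v, ‖x v‖^2) := Real.sqrt_le_sqrt hnorm2
    _ = 2*b^m * Real.sqrt (∑ v, ‖x v‖^2) := by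
        rw [Real.sqrt_mul (sq_nonneg _), Real.sqrt_sq hb0]

lemma z_repr (n N B S : ℕ)
    (W : Matrix (Fin N) (Fin N) ℝ) (θ : ℝ)
    (y : ℕ → Fin N → EuclideanSpace ℝ (Fin n))
    (z : ℕ → ℤ → Fin N → EuclideanSpace ℝ (Fin n))
    (hz1 : ∀ u, z 1 (-1) u = 0 ∧ z 1 0 u = 0)
    (hzRec : ∀ s ∈ Finset.Icc 1 S, ∀ k ∈ Finset.Ico (0 : ℤ) (B : ℤ), ∀ u,
      z s (k + 1) u = (1 + θ) • (∑ v, W u v • z s k v) - θ • z s (k - 1) u)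
    (hzNext : ∀ s ∈ Finset.Icc 1 (S - 1), ∀ u,
      z (s + 1) (-1) u = z s ((B : ℤ) - 1) u + y s u ∧
        z (s + 1) 0 u = z s (B : ℤ) u + y s u) :
    ∀ s, 1 ≤ s → s ≤ S → ∀ j, j ≤ B + 1 → ∀ u,
      z s ((j:ℤ) - 1) u = ∑ l ∈ Finset.Icc 1 (s-1), gQ W θ ((s-1-l)*B + j) (y l) u := by
  have inner : ∀ s, 1 ≤ s → s ≤ S →
      (∀ u, z s (-1) u = ∑ l ∈ Finset.Icc 1 (s-1), gQ W θ ((s-1-l)*B + 0) (y l) u) →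
      (∀ u, z s 0 u = ∑ l ∈ Finset.Icc 1 (s-1), gQ W θ ((s-1-l)*B + 1) (y l) u) →
      ∀ j, j ≤ B + 1 → ∀ u,
      z s ((j:ℤ) - 1) u = ∑ l ∈ Finset.Icc 1 (s-1), gQ W θ ((s-1-l)*B + j) (y l) u := by
    intro s hs1 hsS h0 h1 j
    induction j using Nat.twoStepInduction with
    | zero =>
      intro _ u
      have : ((0:ℕ):ℤ) - 1 = (-1 : ℤ) := by norm_num
      rw [this]
      exact h0 u
    | one =>
      intro _ u
      have : ((1:ℕ):ℤ) - 1 = (0 : ℤ) := by norm_num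
      rw [this]
      exact h1 u
    | more j ih1 ih2 =>
      intro hj u
      have hj1 : j + 1 ≤ B + 1 := by omega
      have hj0 : j ≤ B + 1 := by omega
      have hk : (j:ℤ) ∈ Finset.Ico (0:ℤ) (B:ℤ) := by
        rw [Finset.mem_Ico]
        constructor
        · positivity
        · exact_mod_cast (by omega : j < B)
      have hrec := hzRec s (Finset.mem_Icc.mpr ⟨hs1, hsS⟩) (j:ℤ) hk u
      have e1 : ((j+2:ℕ):ℤ) - 1 = (j:ℤ) + 1 := by push_cast; ring
      have e2 : ((j+1:ℕ):ℤ) - 1 = (j:ℤ) := by push_cast; ring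
      have hz_j : ∀ v, z s (j:ℤ) v
          = ∑ l ∈ Finset.Icc 1 (s-1), gQ W θ (((s-1-l)*B + j) + 1) (y l) v := by
        intro v
        have := ih2 hj1 v
        rw [e2] at this
        rw [this]
        exact Finset.sum_congr rfl (fun l _ => by rw [show (s-1-l)*B + (j+1) = ((s-1-l)*B + j) + 1 from rfl])
      have hz_jm : z s ((j:ℤ) - 1) u
          = ∑ l ∈ Finset.Icc 1 (s-1), gQ W θ ((s-1-l)*B + j) (y l) u := ih1 hj0 u
      rw [e1, hrec]
      have hsubst : ∀ v, W u v • z s (j:ℤ) v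
          = ∑ l ∈ Finset.Icc 1 (s-1), W u v • gQ W θ (((s-1-l)*B + j) + 1) (y l) v := by
        intro v
        rw [hz_j v, Finset.smul_sum]
      rw [Finset.sum_congr rfl (fun v _ => hsubst v), Finset.sum_comm, hz_jm,
        Finset.smul_sum, Finset.smul_sum, ← Finset.sum_sub_distrib]
      refine Finset.sum_congr rfl (fun l _ => ?_)
      have hidx : (s-1-l)*B + (j+2) = ((s-1-l)*B + j) + 2 := rfl
      rw [hidx, gQ_succ_succ]
      simp only [Pi.sub_apply, Pi.smul_apply]
  intro s
  induction s with
  | zero => omega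
  | succ s ihs =>
    intro hs1 hsS
    rcases Nat.eq_zero_or_pos s with hs0 | hspos
    · subst hs0
      apply inner 1 (le_refl 1) hsS
      · intro u
        simp [(hz1 u).1]
      · intro u
        simp [(hz1 u).2]
    · have hsS' : s ≤ S := by omega
      have hmem : s ∈ Finset.Icc 1 (S-1) := Finset.mem_Icc.mpr ⟨hspos, by omega⟩
      have hprev := ihs hspos hsS'
      have hBB : (B:ℤ) - 1 = ((B:ℕ):ℤ) - 1 := rfl
      have hzB1 : ∀ u, z s ((B:ℤ) - 1) u
          = ∑ l ∈ Finset.Icc 1 (s-1), gQ W θ ((s-1-l)*B + B) (y l) u := fun u =>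
        hprev B (by omega) u
      have hzB : ∀ u, z s (B:ℤ) u
          = ∑ l ∈ Finset.Icc 1 (s-1), gQ W θ ((s-1-l)*B + (B+1)) (y l) u := by
        intro u
        have := hprev (B+1) (by omega) u
        have e : ((B+1:ℕ):ℤ) - 1 = (B:ℤ) := by push_cast; ring
        rwa [e] at this
      have hins : Finset.Icc 1 (s+1-1) = insert s (Finset.Icc 1 (s-1)) := by
        have h1 : s+1-1 = s := rfl
        rw [h1]
        have : Finset.Icc 1 s = Finset.Icc 1 (s-1) ∪ {s} := by
          ext t
          simp [Finset.mem_Icc, Finset.mem_union]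
          omega
        rw [this, Finset.union_comm]
        rw [Finset.insert_eq]
      have hnotmem : s ∉ Finset.Icc 1 (s-1) := by
        simp [Finset.mem_Icc]
        omega
      apply inner (s+1) (by omega) hsS
      · intro u
        rw [(hzNext s hmem u).1, hzB1 u, hins, Finset.sum_insert hnotmem]
        rw [show s+1-1-s = 0 from by omega, zero_mul, gQ_zero]
        rw [add_comm]
        congr 1
        refine Finset.sum_congr rfl (fun l hl => ?_)
        have hl' := Finset.mem_Icc.mp hl
        have : s+1-1-l = (s-1-l) + 1 := by omega
        rw [this, add_mul, one_mul, add_zero]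
      · intro u
        rw [(hzNext s hmem u).2, hzB u, hins, Finset.sum_insert hnotmem]
        rw [show s+1-1-s = 0 from by omega, zero_mul, gQ_one]
        rw [add_comm]
        congr 1
        refine Finset.sum_congr rfl (fun l hl => ?_)
        have hl' := Finset.mem_Icc.mp hl
        have : (s+1-1-l)*B + 1 = (s-1-l)*B + B + 1 := by
          have h2 : s+1-1-l = (s-1-l) + 1 := by omega
          rw [h2, add_mul, one_mul]
        rw [this, show (s-1-l)*B + (B+1) = (s-1-l)*B + B + 1 from by omega]

lemma bB_le (N B : ℕ) (hN : 1 ≤ N) (σ b : ℝ) (hσ0 : 0 ≤ σ) (hσ1 : σ < 1)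
    (hb : b = 1 - (1 - 1/Real.sqrt 2) * Real.sqrt (1-σ))
    (hB : B = ⌈Real.sqrt 2 * Real.log (N * Real.sqrt (14 * N)) /
        ((Real.sqrt 2 - 1) * Real.sqrt (1 - σ))⌉₊) :
    b^B ≤ ((N:ℝ) * Real.sqrt (14*N))⁻¹ := by
  set s := Real.sqrt 2 with hsdef
  have hs2 : s^2 = 2 := Real.sq_sqrt (by norm_num)
  have hspos : 0 < s := Real.sqrt_pos.2 (by norm_num)
  have hs1 : 1 < s := by nlinarith
  set δ := Real.sqrt (1-σ) with hδdef
  have hδ2 : δ^2 = 1 - σ := Real.sq_sqrt (by linarith)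
  have hδpos : 0 < δ := Real.sqrt_pos.2 (by linarith)
  set c := 1 - 1/s with hcdef
  have hcval : c = (s-1)/s := by rw [hcdef]; field_simp
  have hcpos : 0 < c := by rw [hcval]; exact div_pos (by linarith) hspos
  have hbnn : 0 ≤ b := by linarith [(b_bounds σ b hσ0 hσ1 (by rw [hb, hcdef])).1]
  set A := (N : ℝ) * Real.sqrt (14*N) with hAdef
  have hN1 : (1:ℝ) ≤ N := by exact_mod_cast hN
  have hsqrt14 : 1 ≤ Real.sqrt (14*N) := by
    rw [show (1:ℝ) = Real.sqrt 1 from (Real.sqrt_one).symm]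
    exact Real.sqrt_le_sqrt (by nlinarith)
  have hA1 : 1 ≤ A := by
    rw [hAdef]
    nlinarith
  have hApos : 0 < A := by linarith
  set L := Real.log A with hLdef
  have hL0 : 0 ≤ L := Real.log_nonneg hA1
  have hBge : s * L / ((s-1)*δ) ≤ (B:ℝ) := by
    rw [hB]
    exact Nat.le_ceil _
  have hbexp : b ≤ Real.exp (-(c*δ)) := by
    have := Real.add_one_le_exp (-(c*δ))
    rw [hb]
    linarith
  have hLB : L ≤ (B:ℝ) * (c*δ) := by
    have h1 : 0 ≤ c*δ := by positivity
    have h2 := mul_le_mul_of_nonneg_right hBge h1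
    have h3 : s * L / ((s-1)*δ) * (c*δ) = L := by
      rw [hcval]
      have h4 : s - 1 ≠ 0 := by linarith
      have h5 : δ ≠ 0 := ne_of_gt hδpos
      have h6 : s ≠ 0 := ne_of_gt hspos
      field_simp
    linarith [h3 ▸ h2]
  calc b^B ≤ (Real.exp (-(c*δ)))^B := pow_le_pow_left₀ hbnn hbexp B
    _ = Real.exp ((B:ℝ) * (-(c*δ))) := by rw [← Real.exp_nat_mul]
    _ ≤ Real.exp (-L) := by
        apply Real.exp_le_exp.mpr
        nlinarith
    _ = A⁻¹ := by rw [Real.exp_neg, Real.exp_log hApos]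

lemma variance_le (n N : ℕ) (y : Fin N → EuclideanSpace ℝ (Fin n))
    (c : EuclideanSpace ℝ (Fin n)) (hc : (N:ℝ) • c = ∑ v, y v) :
    ∑ v, ‖y v - c‖^2 ≤ ∑ v, ‖y v‖^2 := by
  have expand : ∀ v, ‖y v - c‖^2 = ‖y v‖^2 - 2*(inner ℝ (y v) c : ℝ) + ‖c‖^2 :=
    fun v => norm_sub_sq_real (y v) c
  rw [Finset.sum_congr rfl (fun v _ => expand v)]
  rw [Finset.sum_add_distrib, Finset.sum_sub_distrib, Finset.sum_const, Finset.card_univ,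
    Fintype.card_fin, nsmul_eq_mul]
  have hinner : ∑ v, (inner ℝ (y v) c : ℝ) = (N:ℝ) * ‖c‖^2 := by
    rw [← sum_inner, ← hc, real_inner_smul_left, real_inner_self_eq_norm_sq]
  have h2 : ∑ x, 2 * (inner ℝ (y x) c : ℝ) = 2 * ((N:ℝ) * ‖c‖^2) := by
    rw [← Finset.mul_sum, hinner]
  rw [h2]
  nlinarith [sq_nonneg ‖c‖, Nat.cast_nonneg (α := ℝ) N]

/-- deviation of the block gossip iterate `z_s^B(u)` from the
running average of the increments. -/
theorem stmt_11 (n N B S : ℕ) (hN : 1 ≤ N) (hS : 1 ≤ S)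
    (W : Matrix (Fin N) (Fin N) ℝ)
    (hWsymm : W.IsSymm) (hWnonneg : ∀ i j, 0 ≤ W i j)
    (hWrow : ∀ i, ∑ j, W i j = 1) (hWcol : ∀ j, ∑ i, W i j = 1)
    (hWpsd : W.PosSemidef)
    (hσ0 : 0 ≤ sigma2 W) (hσ1 : sigma2 W < 1)
    (θ b : ℝ)
    (hθ : θ = 1 / (1 + Real.sqrt (1 - sigma2 W ^ 2)))
    (hb : b = 1 - (1 - 1 / Real.sqrt 2) * Real.sqrt (1 - sigma2 W))
    (hB : B = ⌈Real.sqrt 2 * Real.log (N * Real.sqrt (14 * N)) /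
        ((Real.sqrt 2 - 1) * Real.sqrt (1 - sigma2 W))⌉₊)
    (y : ℕ → Fin N → EuclideanSpace ℝ (Fin n))
    (z : ℕ → ℤ → Fin N → EuclideanSpace ℝ (Fin n))
    (hz1 : ∀ u, z 1 (-1) u = 0 ∧ z 1 0 u = 0)
    (hzRec : ∀ s ∈ Finset.Icc 1 S, ∀ k ∈ Finset.Ico (0 : ℤ) (B : ℤ), ∀ u,
      z s (k + 1) u = (1 + θ) • (∑ v, W u v • z s k v) - θ • z s (k - 1) u)
    (hzNext : ∀ s ∈ Finset.Icc 1 (S - 1), ∀ u,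
      z (s + 1) (-1) u = z s ((B : ℤ) - 1) u + y s u ∧
        z (s + 1) 0 u = z s (B : ℤ) u + y s u) :
    ∀ u : Fin N, ∀ s ∈ Finset.Icc 1 S,
      ‖z s (B : ℤ) u - (N : ℝ)⁻¹ • ∑ l ∈ Finset.Icc 1 (s - 1), ∑ v, y l v‖ ≤
        2 / (N * Real.sqrt N) *
          ∑ l ∈ Finset.Icc 1 (s - 1),
            b ^ ((s - l - 1) * B) * Real.sqrt (∑ v, ‖y l v‖ ^ 2) := by
  intro u s hs
  rw [Finset.mem_Icc] at hs
  obtain ⟨hs1, hsS⟩ := hs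
  have hbhalf := (b_bounds (sigma2 W) b hσ0 hσ1 hb).1
  have hbpos : 0 < b := by linarith
  have hbB := bB_le N B hN (sigma2 W) b hσ0 hσ1 hb hB
  have hN1 : (1:ℝ) ≤ (N:ℝ) := by exact_mod_cast hN
  have hNpos : (0:ℝ) < (N:ℝ) := by linarith
  have hNne : (N:ℝ) ≠ 0 := ne_of_gt hNpos
  -- representation of z s B
  have hrepr := z_repr n N B S W θ y z hz1 hzRec hzNext s hs1 hsS (B+1) (by omega) u
  have e : ((B+1:ℕ):ℤ) - 1 = (B:ℤ) := by push_cast; ring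
  rw [e] at hrepr
  -- mean and deviation
  set c : ℕ → EuclideanSpace ℝ (Fin n) := fun l => (N:ℝ)⁻¹ • ∑ v, y l v with hcdef
  set x : ℕ → Fin N → EuclideanSpace ℝ (Fin n) := fun l v => y l v - c l with hxdef
  have hcsmul : ∀ l, (N:ℝ) • c l = ∑ v, y l v := by
    intro l
    rw [hcdef]
    rw [smul_smul, mul_inv_cancel₀ hNne, one_smul]
  have hxsum : ∀ l, ∑ v, x l v = 0 := by
    intro l
    simp only [hxdef]
    rw [Finset.sum_sub_distrib, Finset.sum_const, Finset.card_univ, Fintype.card_fin]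
    rw [← Nat.cast_smul_eq_nsmul ℝ, hcsmul l, sub_self]
  have hterm : ∀ l, gQ W θ ((s-1-l)*B + (B+1)) (y l) u
      = gQ W θ ((s-1-l)*B + (B+1)) (x l) u + c l := by
    intro l
    have h1 : y l = x l + (fun _ => c l) := by
      funext v
      simp only [hxdef, Pi.add_apply]
      abel
    rw [h1, gQ_add, gQ_const W θ hWrow]
    simp
  have hsplit : z s (B:ℤ) u - (N : ℝ)⁻¹ • ∑ l ∈ Finset.Icc 1 (s - 1), ∑ v, y l v
      = ∑ l ∈ Finset.Icc 1 (s-1), gQ W θ ((s-1-l)*B + (B+1)) (x l) u := by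
    rw [hrepr, Finset.sum_congr rfl (fun l _ => hterm l), Finset.sum_add_distrib]
    have : ∑ l ∈ Finset.Icc 1 (s-1), c l
        = (N : ℝ)⁻¹ • ∑ l ∈ Finset.Icc 1 (s - 1), ∑ v, y l v := by
      rw [Finset.smul_sum]
    rw [this]
    abel
  rw [hsplit]
  -- norm bound
  have hNN : (0:ℝ) < (N:ℝ) * Real.sqrt N := by positivity
  have hbB2 : b^B ≤ ((N:ℝ) * Real.sqrt N)⁻¹ := by
    refine le_trans hbB ?_
    apply inv_anti₀ hNN
    apply mul_le_mul_of_nonneg_left _ hNpos.le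
    exact Real.sqrt_le_sqrt (by nlinarith)
  calc ‖∑ l ∈ Finset.Icc 1 (s-1), gQ W θ ((s-1-l)*B + (B+1)) (x l) u‖
      ≤ ∑ l ∈ Finset.Icc 1 (s-1), ‖gQ W θ ((s-1-l)*B + (B+1)) (x l) u‖ :=
        norm_sum_le _ _
    _ ≤ ∑ l ∈ Finset.Icc 1 (s-1),
          2*b^((s-1-l)*B + B) * Real.sqrt (∑ v, ‖x l v‖^2) := by
        refine Finset.sum_le_sum (fun l _ => ?_)
        exact gQ_vec_bound n N W hWsymm hWnonneg hWrow hWcol hWpsd hσ0 hσ1 θ b hθ hb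
          ((s-1-l)*B + B) (x l) (hxsum l) u
    _ ≤ ∑ l ∈ Finset.Icc 1 (s-1),
          2*b^((s-1-l)*B + B) * Real.sqrt (∑ v, ‖y l v‖^2) := by
        refine Finset.sum_le_sum (fun l _ => ?_)
        apply mul_le_mul_of_nonneg_left _ (by positivity)
        apply Real.sqrt_le_sqrt
        exact variance_le n N (y l) (c l) (hcsmul l)
    _ ≤ ∑ l ∈ Finset.Icc 1 (s-1),
          2 / ((N:ℝ) * Real.sqrt N) * (b ^ ((s - l - 1) * B) * Real.sqrt (∑ v, ‖y l v‖ ^ 2)) := by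
        refine Finset.sum_le_sum (fun l _ => ?_)
        have hidx : s - 1 - l = s - l - 1 := by omega
        rw [hidx, pow_add]
        have hT : 0 ≤ Real.sqrt (∑ v, ‖y l v‖ ^ 2) := Real.sqrt_nonneg _
        have hP : 0 ≤ b ^ ((s-l-1)*B) := by positivity
        calc 2 * (b ^ ((s-l-1)*B) * b^B) * Real.sqrt (∑ v, ‖y l v‖ ^ 2)
            ≤ 2 * (b ^ ((s-l-1)*B) * ((N:ℝ) * Real.sqrt N)⁻¹) * Real.sqrt (∑ v, ‖y l v‖ ^ 2) := by
              gcongr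
          _ = 2 / ((N:ℝ) * Real.sqrt N) * (b ^ ((s - l - 1) * B) * Real.sqrt (∑ v, ‖y l v‖ ^ 2)) := by
              field_simp
    _ = 2 / ((N:ℝ) * Real.sqrt N) *
          ∑ l ∈ Finset.Icc 1 (s - 1), b ^ ((s - l - 1) * B) * Real.sqrt (∑ v, ‖y l v‖ ^ 2) := by
        rw [Finset.mul_sum]
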